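/- Let E be a Riesz space with the principal projection property, let e₁, e₂ ∈ E be weak order units, and let F be a Dedekind complete Riesz space. Then: (a) the maps θ₁ : C_{e₁} → C_{e₂}, p ↦ P_p(e₂), and θ₂ : C_{e₂} → C_{e₁}, q ↦ P_q(e₁), are mutually inverse lattice isomorphisms; (b) for every μ ∈ ba(C_{e₂},F) one has μ ∘ θ₁ ∈ ba(C_{e₁},F), and for every μ ∈ ba(C_{e₁},F) one has μ ∘ θ₂ ∈ ba(C_{e₂},F); (c) the maps Φ₁ : ba(C_{e₂},F) → ba(C_{e₁},F), μ ↦ μ ∘ θ₁, and Φ₂ : ba(C_{e₁},F) → ba(C_{e₂},F), μ ↦ μ ∘ θ₂, are mutually inverse Riesz isomorphisms. -/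

import Mathlib

open scoped Classical

noncomputable section

namespace RieszPaper

universe u v w

/-! ### Basic Riesz space notions -/

section BasicDefs

variable {E : Type u} [Lattice E] [AddCommGroup E]

/-- The positive part `x ⊔ 0`. -/
def rpos (x : E) : E := x ⊔ 0

/-- The set of components of `e`, i.e. elements `p` with `p ⊓ (e - p) = 0`. -/
def Comp (e : E) : Set E := {p | p ⊓ (e - p) = 0}

/-- Disjoint complement of a set. -/
def disjC (S : Set E) : Set E := {x | ∀ y ∈ S, |x| ⊓ |y| = 0}

/-- The principal band generated by `f` (as double disjoint complement). -/
def pBand (f : E) : Set E := disjC (disjC {f})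

/-- `e` is a weak order unit: `e > 0` and the band generated by `e` is all of `E`. -/
def IsWeakUnit (e : E) : Prop := 0 < e ∧ ∀ x : E, 0 ≤ x → x ⊓ e = 0 → x = 0

/-- The chain `x ⊓ n•|f|`, whose supremum is the band projection of `x ≥ 0`
onto the band generated by `f`. -/
def projChain (f x : E) : Set E := {y | ∃ n : ℕ, y = x ⊓ n • |f|}

/-- Band projection of a positive element onto the band generated by `f`. -/
def projP (f x : E) : E := if h : ∃ s, IsLUB (projChain f x) s then h.choose else 0

/-- Band projection onto the principal band generated by `f`. -/
def proj (f x : E) : E := projP f (rpos x) - projP f (rpos (-x))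

/-- The principal projection property. -/
def HasPPP (α : Type u) [Lattice α] [AddCommGroup α] : Prop :=
  ∀ f x : α, 0 ≤ x → ∃ s, IsLUB (projChain f x) s

/-- A subset is sequentially order closed. -/
def SeqOrderClosed (D : Set E) : Prop :=
  (∀ (x : ℕ → E) (l : E), (∀ n, x n ∈ D) → Monotone x → IsLUB (Set.range x) l → l ∈ D) ∧
  (∀ (x : ℕ → E) (l : E), (∀ n, x n ∈ D) → Antitone x → IsGLB (Set.range x) l → l ∈ D)

end BasicDefs

/-! ### Charges on components -/

section Charges

variable {E : Type u} [Lattice E] [AddCommGroup E]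
variable {F : Type v} [Lattice F] [AddCommGroup F]

/-- `μ` is an `F`-valued signed charge on the components of `e`. -/
def IsChargeOn (e : E) (μ : E → F) : Prop :=
  μ 0 = 0 ∧ ∀ p q : E, p ∈ Comp e → q ∈ Comp e → p ⊓ q = 0 → μ (p + q) = μ p + μ q

/-- `μ` is order bounded on the components of `e`. -/
def OrdBddOn (e : E) (μ : E → F) : Prop :=
  ∃ g : F, 0 ≤ g ∧ ∀ p ∈ Comp e, |μ p| ≤ g

/-- `ba(C_e, F)`: order bounded signed `F`-valued charges on the components of `e`. -/
def baSet (e : E) : Set (E → F) := {μ | IsChargeOn e μ ∧ OrdBddOn e μ}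

/-- The order on charges: `μ ≤ ν` iff `ν - μ` is positive on components. -/
def baLe (e : E) (μ ν : E → F) : Prop := ∀ p ∈ Comp e, μ p ≤ ν p

/-- `η` is the least upper bound of `S ⊆ ba(C_e,F)` within `ba(C_e,F)`. -/
def IsLUBba (e : E) (S : Set (E → F)) (η : E → F) : Prop :=
  η ∈ baSet e ∧ (∀ μ ∈ S, baLe e μ η) ∧
    ∀ ξ ∈ baSet e, (∀ μ ∈ S, baLe e μ ξ) → baLe e η ξ

/-- `η` is the greatest lower bound of `S ⊆ ba(C_e,F)` within `ba(C_e,F)`. -/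
def IsGLBba (e : E) (S : Set (E → F)) (η : E → F) : Prop :=
  η ∈ baSet e ∧ (∀ μ ∈ S, baLe e η μ) ∧
    ∀ ξ ∈ baSet e, (∀ μ ∈ S, baLe e ξ μ) → baLe e ξ η

end Charges

section ChargesCCL

variable {E : Type u} [Lattice E] [AddCommGroup E]
variable {F : Type v} [ConditionallyCompleteLattice F] [AddCommGroup F]

/-- Pointwise formula for the supremum of two charges. -/
def chSupAt (e : E) (μ ν : E → F) (p : E) : F :=
  sSup {v | ∃ q, q ∈ Comp e ∧ q ≤ p ∧ v = μ q + ν (p - q)}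

/-- Pointwise formula for the infimum of two charges. -/
def chInfAt (e : E) (μ ν : E → F) (p : E) : F :=
  sInf {v | ∃ q, q ∈ Comp e ∧ q ≤ p ∧ v = μ q + ν (p - q)}

/-- The modulus of a charge, via the Riesz–Kantorovich-type formula. -/
def chargeAbs (e : E) (μ : E → F) : E → F :=
  fun p => sSup {v | ∃ q, q ∈ Comp e ∧ q ≤ p ∧ v = μ q - μ (p - q)}

/-- The positive part of a charge. -/
def chargePos (e : E) (μ : E → F) : E → F :=
  fun p => sSup {v | ∃ q, q ∈ Comp e ∧ q ≤ p ∧ v = μ q}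

/-- The negative part of a charge. -/
def chargeNeg (e : E) (μ : E → F) : E → F :=
  fun p => sSup {v | ∃ q, q ∈ Comp e ∧ q ≤ p ∧ v = -(μ q)}

end ChargesCCL

/-! ### Operators -/

section Ops

variable {E : Type u} [Lattice E] [AddCommGroup E] [Module ℝ E]

def PosOn (Lp : Set E) (φ : E → E) : Prop := ∀ f ∈ Lp, 0 ≤ f → 0 ≤ φ f

def AddOn (Lp : Set E) (φ : E → E) : Prop :=
  ∀ f g : E, f ∈ Lp → g ∈ Lp → φ (f + g) = φ f + φ g

def SmulOn (Lp : Set E) (φ : E → E) : Prop :=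
  ∀ (r : ℝ) (f : E), f ∈ Lp → φ (r • f) = r • φ f

/-- `φ` is a regular operator on `Lp`: a difference of two positive linear maps. -/
def RegularOn (Lp : Set E) (φ : E → E) : Prop :=
  ∃ ψ₁ ψ₂ : E → E, AddOn Lp ψ₁ ∧ AddOn Lp ψ₂ ∧ SmulOn Lp ψ₁ ∧ SmulOn Lp ψ₂ ∧
    PosOn Lp ψ₁ ∧ PosOn Lp ψ₂ ∧ ∀ f ∈ Lp, φ f = ψ₁ f - ψ₂ f

/-- Uniform convergence of a sequence with regulator `u`. -/
def UnifConv (u : E) (s : ℕ → E) (f : E) : Prop :=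
  ∃ ε : ℕ → ℝ, Antitone ε ∧ Filter.Tendsto ε Filter.atTop (nhds 0) ∧
    ∀ n, |f - s n| ≤ ε n • u

end Ops

/-! ### Conditional expectation operators -/

section CondExp

variable {E : Type u} [ConditionallyCompleteLattice E] [AddCommGroup E] [Module ℝ E]

/-- `(E, e, T)` is a conditional Riesz triple: `e` is a weak order unit and `T` is a
strictly positive conditional expectation operator with `T e = e` whose range is a
Dedekind complete Riesz subspace. -/
structure IsCondTriple (e : E) (T : E →ₗ[ℝ] E) : Prop where
  weakUnit : IsWeakUnit e
  pos : ∀ x : E, 0 ≤ x → 0 ≤ T x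
  strictPos : ∀ x : E, 0 < x → 0 < T x
  ordCont : ∀ (A : Set E) (s : E), A.Nonempty → DirectedOn (· ≤ ·) A →
    IsLUB A s → IsLUB (T '' A) (T s)
  idem : ∀ x : E, T (T x) = T x
  unitFix : T e = e
  rangeSupClosed : ∀ x y : E, x ∈ Set.range T → y ∈ Set.range T → x ⊔ y ∈ Set.range T
  rangeDedekind : ∀ A : Set E, A ⊆ Set.range T → A.Nonempty → BddAbove A →
    sSup A ∈ Set.range T

end CondExp

/-! ### Universal completion and T-universal completeness -/

section Univ

variable {E : Type u} {G : Type v}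
variable [ConditionallyCompleteLattice E] [AddCommGroup E] [Module ℝ E]
variable [ConditionallyCompleteLattice G] [AddCommGroup G] [Module ℝ G]

/-- `j : E → G` realizes `G` as a universal completion of `E`. -/
structure IsUnivCompletion (j : E →ₗ[ℝ] G) : Prop where
  bipos : ∀ x : E, 0 ≤ j x ↔ 0 ≤ x
  latHom : ∀ x y : E, j (x ⊔ y) = j x ⊔ j y
  dense : ∀ z : G, 0 < z → ∃ x : E, 0 < j x ∧ j x ≤ z
  univComplete : ∀ S : Set G, (∀ x ∈ S, 0 ≤ x) →
    S.Pairwise (fun a b => a ⊓ b = 0) → BddAbove S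

/-- `E` is `T`-universally complete (relative to the universal completion `j : E → G`):
every nonempty upwards directed subset `A ⊆ E` such that `j[T[A]]` is bounded above in
`G` has a supremum in `E`. -/
def TUnivComplete (T : E →ₗ[ℝ] E) (j : E →ₗ[ℝ] G) : Prop :=
  ∀ A : Set E, A.Nonempty → DirectedOn (· ≤ ·) A →
    BddAbove (⇑j '' (⇑T '' A)) → BddAbove A

end Univ

/-- `mul` is a commutative `f`-algebra multiplication with unit `u`. -/
structure IsFAlgebraMul {G : Type v} [Lattice G] [AddCommGroup G] [Module ℝ G]
    (u : G) (mul : G → G → G) : Prop where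
  comm : ∀ x y, mul x y = mul y x
  assoc : ∀ x y z, mul (mul x y) z = mul x (mul y z)
  add_left : ∀ x y z, mul (x + y) z = mul x z + mul y z
  smul_left : ∀ (r : ℝ) (x y), mul (r • x) y = r • mul x y
  one_mul : ∀ x, mul u x = x
  mul_nonneg : ∀ x y, 0 ≤ x → 0 ≤ y → 0 ≤ mul x y
  disj : ∀ x y z, x ⊓ y = 0 → 0 ≤ z → mul x z ⊓ y = 0

/-! ### Bundled T-universally complete conditional Riesz triples -/

/-- A `T`-universally complete conditional Riesz triple `(E, e, T)`, together with a
universal completion `j : E → G` carrying its `f`-algebra multiplication (with unit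
`j e`).  Since `E = L¹(T)` is an `R(T)`-module, products of elements of `L^∞(T)` with
elements of `E` again lie in `E` (`mulClosed`). -/
structure CRT (E : Type u) (G : Type v)
    [ConditionallyCompleteLattice E] [AddCommGroup E] [Module ℝ E]
    [CovariantClass E E (· + ·) (· ≤ ·)] [PosSMulMono ℝ E]
    [ConditionallyCompleteLattice G] [AddCommGroup G] [Module ℝ G]
    [CovariantClass G G (· + ·) (· ≤ ·)] [PosSMulMono ℝ G] where
  e : E
  T : E →ₗ[ℝ] E
  j : E →ₗ[ℝ] G
  mul : G → G → G
  triple : IsCondTriple e T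
  compl : IsUnivCompletion j
  falg : IsFAlgebraMul (j e) mul
  tuc : TUnivComplete T j
  mulClosed : ∀ f g : E, (∃ h : E, h ∈ Set.range T ∧ 0 ≤ h ∧ |f| ≤ h) →
    mul (j f) (j g) ∈ Set.range ⇑j

namespace CRT

variable {E : Type u} {G : Type v}
variable [ConditionallyCompleteLattice E] [AddCommGroup E] [Module ℝ E]
  [CovariantClass E E (· + ·) (· ≤ ·)] [PosSMulMono ℝ E]
variable [ConditionallyCompleteLattice G] [AddCommGroup G] [Module ℝ G]
  [CovariantClass G G (· + ·) (· ≤ ·)] [PosSMulMono ℝ G]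
variable (C : CRT E G)

/-- The range `R(T)`. -/
def R : Set E := Set.range ⇑C.T

/-- The product `g · f` of two elements of `E = L¹(T)`, computed in the universal
completion (meaningful whenever the product lies again in `E`, e.g. for
`g ∈ R(T)` or `g ∈ L^∞(T)`). -/
def sm (g f : E) : E := @Function.invFun E G ⟨0⟩ (⇑C.j) (C.mul (C.j g) (C.j f))

/-- `L^∞(T) = {f : |f| ≤ g for some g ∈ R(T)₊}`. -/
def Linf : Set E := {f | ∃ h ∈ C.R, 0 ≤ h ∧ |f| ≤ h}

/-- The `R(T)`-valued norm `‖f‖_{T,1} = T |f|`. -/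
def nrm1 (f : E) : E := C.T |f|

/-- The `R(T)`-valued norm `‖f‖_{T,∞} = inf {α ∈ R(T)₊ : |f| ≤ α}`. -/
def nrmInf (f : E) : E := sInf {a | a ∈ C.R ∧ 0 ≤ a ∧ |f| ≤ a}

/-- Order bounded signed `R(T)`-valued charges on the components of `u`. -/
def baR (u : E) : Set (E → E) :=
  {μ | IsChargeOn u μ ∧ (∀ p ∈ Comp u, μ p ∈ C.R) ∧
     ∃ g ∈ C.R, 0 ≤ g ∧ ∀ p ∈ Comp u, |μ p| ≤ g}

/-- `ba(T)`: the `T`-absolutely continuous charges in `ba(C_e, R(T))`. -/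
def baT : Set (E → E) :=
  {μ | μ ∈ C.baR C.e ∧ ∀ p ∈ Comp C.e, μ p ∈ pBand (C.T p)}

/-- `x = ∑ αᵢ pᵢ` is a standard representation of the `e`-step function `x` with
`R(T)`-coefficients. -/
def IsStdRep (x : E) (n : ℕ) (α p : Fin n → E) : Prop :=
  (∀ i, α i ∈ C.R) ∧ (∀ i, p i ∈ Comp C.e) ∧
  (∀ i j, i ≠ j → p i ⊓ p j = 0) ∧ (∑ i, p i) = C.e ∧
  x = ∑ i, C.sm (α i) (p i)

/-- `S_e(T)`: the `e`-step functions with `R(T)`-coefficients. -/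
def Steps : Set E := {x | ∃ (n : ℕ) (α p : Fin n → E), C.IsStdRep x n α p}

/-- The integral `I_μ` of a step function: `I_μ (∑ αᵢ pᵢ) = ∑ αᵢ μ(pᵢ)`. -/
def Imu (μ : E → E) (x : E) : E :=
  @Classical.epsilon E ⟨0⟩ fun v =>
    ∃ (n : ℕ) (α p : Fin n → E), C.IsStdRep x n α p ∧ v = ∑ i, C.sm (α i) (μ (p i))

/-- The integral of a positive element of `L^∞(T)` with respect to a positive charge. -/
def intPos (μ : E → E) (f : E) : E :=
  sSup {v | ∃ g ∈ C.Steps, 0 ≤ g ∧ g ≤ f ∧ v = C.Imu μ g}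

/-- The integral `∫ f dμ = ∫ f⁺ dμ⁺ − ∫ f⁻ dμ⁺ − ∫ f⁺ dμ⁻ + ∫ f⁻ dμ⁻`. -/
def integral (μ : E → E) (f : E) : E :=
  C.intPos (chargePos C.e μ) (rpos f) - C.intPos (chargePos C.e μ) (rpos (-f))
    - C.intPos (chargeNeg C.e μ) (rpos f) + C.intPos (chargeNeg C.e μ) (rpos (-f))

/-- Membership in `L^r(Lp, R(T))`: regular linear operators with values in `R(T)`. -/
structure MemLr (Lp : Set E) (φ : E → E) : Prop where
  add : AddOn Lp φ
  smul : SmulOn Lp φ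
  mem : ∀ f ∈ Lp, φ f ∈ C.R
  regular : RegularOn Lp φ

/-- Membership in the `T`-strong dual of `(Lp, nrm)`: `R(T)`-linear, regular,
`nrm`-bounded maps into `R(T)`. -/
structure MemDual (Lp : Set E) (nrm : E → E) (φ : E → E) : Prop where
  add : AddOn Lp φ
  smul : SmulOn Lp φ
  modHom : ∀ g f : E, g ∈ C.R → f ∈ Lp → φ (C.sm g f) = C.sm g (φ f)
  mem : ∀ f ∈ Lp, φ f ∈ C.R
  regular : RegularOn Lp φ
  bdd : ∃ k ∈ C.R, 0 ≤ k ∧ ∀ f ∈ Lp, |φ f| ≤ C.sm k (nrm f)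

/-- The `R(T)`-valued norm on the `T`-strong dual. -/
def dualNorm (Lp : Set E) (nrm : E → E) (φ : E → E) : E :=
  sInf {g | g ∈ C.R ∧ 0 ≤ g ∧ ∀ f ∈ Lp, |φ f| ≤ C.sm g (nrm f)}

/-- `|φ| ≤ |ψ|` in `L^r(Lp, R(T))`, via the Riesz–Kantorovich formula. -/
def OpAbsLe (Lp : Set E) (φ ψ : E → E) : Prop :=
  ∀ f ∈ Lp, 0 ≤ f → ∀ g ∈ Lp, |g| ≤ f →
    |φ g| ≤ sSup {v | ∃ h, h ∈ Lp ∧ |h| ≤ f ∧ v = |ψ h|}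

/-- The canonical partial inverse of `h` in `R(T)`: the element `g` of the band
generated by `|h|` with `h g = P_{|h|} e`. -/
def pinv (h : E) : E :=
  @Classical.epsilon E ⟨0⟩ fun g =>
    g ∈ C.R ∧ g ∈ pBand (|h|) ∧ C.sm h g = proj (|h|) C.e

end CRT

/-! ### Bundled Dedekind complete Riesz spaces, for existential statements -/

structure BRiesz : Type (u + 1) where
  carrier : Type u
  [ccl : ConditionallyCompleteLattice carrier]
  [grp : AddCommGroup carrier]
  [mod : Module ℝ carrier]
  [cov : CovariantClass carrier carrier (· + ·) (· ≤ ·)]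
  [psm : PosSMulMono ℝ carrier]

attribute [instance] BRiesz.ccl BRiesz.grp BRiesz.mod BRiesz.cov BRiesz.psm

/-- `(F, ẽ, T̃)` together with `i : E → F` is a `T`-universal completion of `(E, e, T)`. -/
structure IsTUnivCompletion
    {E : Type u} [ConditionallyCompleteLattice E] [AddCommGroup E] [Module ℝ E]
    {F : Type v} [ConditionallyCompleteLattice F] [AddCommGroup F] [Module ℝ F]
    (e : E) (T : E →ₗ[ℝ] E) (e' : F) (T' : F →ₗ[ℝ] F) (i : E →ₗ[ℝ] F) : Prop where
  triple : IsCondTriple e' T'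
  tuniv : ∃ (U : BRiesz.{v}) (j : F →ₗ[ℝ] U.carrier),
    IsUnivCompletion j ∧ TUnivComplete T' j
  bipos : ∀ x : E, 0 ≤ i x ↔ 0 ≤ x
  latHom : ∀ x y : E, i (x ⊔ y) = i x ⊔ i y
  dense : ∀ z : F, 0 < z → ∃ x : E, 0 < i x ∧ i x ≤ z
  unit : i e = e'
  comm : ∀ x : E, T' (i x) = i (T x)


/-! ### Powers via functional calculus, for the spaces `L^p(T)` -/

/-- A `T`-universally complete conditional Riesz triple together with the power
functions `x ↦ x^p` (`x ≥ 0`, `p > 0`) of the functional calculus on the universal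
completion. -/
structure CRTP (E : Type u) (G : Type v)
    [ConditionallyCompleteLattice E] [AddCommGroup E] [Module ℝ E]
    [CovariantClass E E (· + ·) (· ≤ ·)] [PosSMulMono ℝ E]
    [ConditionallyCompleteLattice G] [AddCommGroup G] [Module ℝ G]
    [CovariantClass G G (· + ·) (· ≤ ·)] [PosSMulMono ℝ G]
    extends CRT E G where
  epow : G → ℝ → G
  epow_one : ∀ x : G, 0 ≤ x → epow x 1 = x
  epow_nonneg : ∀ (x : G) (p : ℝ), 0 ≤ x → 0 < p → 0 ≤ epow x p
  epow_mono : ∀ (x y : G) (p : ℝ), 0 ≤ x → x ≤ y → 0 < p → epow x p ≤ epow y p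
  epow_unit : ∀ p : ℝ, 0 < p → epow (toCRT.j toCRT.e) p = toCRT.j toCRT.e
  epow_exp_mul : ∀ (x : G) (p q : ℝ), 0 ≤ x → 0 < p → 0 < q →
    epow (epow x p) q = epow x (p * q)
  epow_mul : ∀ (x y : G) (p : ℝ), 0 ≤ x → 0 ≤ y → 0 < p →
    epow (toCRT.mul x y) p = toCRT.mul (epow x p) (epow y p)
  epow_succ : ∀ (x : G) (n : ℕ), 0 ≤ x → 0 < n →
    epow x ((n : ℝ) + 1) = toCRT.mul (epow x (n : ℝ)) x
  epow_sup : ∀ (x y : G) (p : ℝ), 0 ≤ x → 0 ≤ y → 0 < p →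
    epow (x ⊔ y) p = epow x p ⊔ epow y p
  epow_rangeT : ∀ (x : E) (p : ℝ), 0 ≤ x → 0 < p → x ∈ Set.range ⇑toCRT.T →
    epow (toCRT.j x) p ∈ ⇑toCRT.j '' Set.range ⇑toCRT.T

namespace CRTP

variable {E : Type u} {G : Type v}
variable [ConditionallyCompleteLattice E] [AddCommGroup E] [Module ℝ E]
  [CovariantClass E E (· + ·) (· ≤ ·)] [PosSMulMono ℝ E]
variable [ConditionallyCompleteLattice G] [AddCommGroup G] [Module ℝ G]
  [CovariantClass G G (· + ·) (· ≤ ·)] [PosSMulMono ℝ G]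
variable (C : CRTP E G)

/-- the `p`-th power of `x ∈ E`, computed in the universal completion. -/
def powE (x : E) (p : ℝ) : E :=
  @Function.invFun E G ⟨0⟩ (⇑C.toCRT.j) (C.epow (C.toCRT.j x) p)

/-- `L^p(T) = {f ∈ L¹(T) : |f|^p ∈ L¹(T)}` for `p ∈ [1, ∞)`. -/
def LpSet (p : ℝ) : Set E := {f | C.epow (C.toCRT.j |f|) p ∈ Set.range ⇑C.toCRT.j}

/-- The `R(T)`-valued norm `‖f‖_{T,p} = (T |f|^p)^{1/p}`. -/
def nrmP (p : ℝ) (f : E) : E := C.powE (C.toCRT.T (C.powE |f| p)) (1 / p)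

end CRTP

section Aux

variable {E : Type u} [Lattice E] [AddCommGroup E] [CovariantClass E E (· + ·) (· ≤ ·)]

lemma aux_inf_add_le {a b c : E} (ha : 0 ≤ a) (hb : 0 ≤ b) (hc : 0 ≤ c) :
    a ⊓ (b + c) ≤ a ⊓ b + a ⊓ c := by
  have h1 : a ⊓ (b + c) ≤ (a + c) ⊓ (b + c) :=
    le_inf (inf_le_left.trans (le_add_of_nonneg_right hc)) inf_le_right
  have h2 : (a + c) ⊓ (b + c) = a ⊓ b + c := by
    rw [add_comm a c, add_comm b c, ← add_inf, add_comm]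
  have h3 : a ⊓ (b + c) ≤ a ⊓ (a ⊓ b + c) := le_inf inf_le_left ((h1.trans h2.le))
  have h4 : a ⊓ (a ⊓ b + c) = a ⊓ b + (a - a ⊓ b) ⊓ c := by
    rw [add_inf, add_sub_cancel]
  have h5 : (a - a ⊓ b) ⊓ c ≤ a ⊓ c :=
    inf_le_inf_right c (sub_le_self a (le_inf ha hb))
  calc a ⊓ (b + c) ≤ a ⊓ (a ⊓ b + c) := h3
    _ = a ⊓ b + (a - a ⊓ b) ⊓ c := h4
    _ ≤ a ⊓ b + a ⊓ c := add_le_add_right h5 _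

lemma aux_disj_nsmul {a b : E} (ha : 0 ≤ a) (hb : 0 ≤ b) (h : a ⊓ b = 0) (n : ℕ) :
    a ⊓ n • b = 0 := by
  induction n with
  | zero => simpa using le_antisymm (by simpa using inf_le_right) (le_inf ha le_rfl)
  | succ n ih =>
    have hnb : 0 ≤ n • b := nsmul_nonneg hb n
    have := aux_inf_add_le ha hnb hb (c := b)
    rw [ih, h, add_zero] at this
    have h0 : 0 ≤ a ⊓ (n • b + b) := le_inf ha (by positivity)
    rw [succ_nsmul]
    exact le_antisymm this h0

lemma aux_disj_sup {a b c : E} (ha : 0 ≤ a) (hb : 0 ≤ b) (hc : 0 ≤ c)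
    (h1 : a ⊓ c = 0) (h2 : b ⊓ c = 0) : (a ⊔ b) ⊓ c = 0 := by
  have hab : a ⊔ b ≤ a + b := sup_le (le_add_of_nonneg_right hb) (le_add_of_nonneg_left ha)
  have : (a ⊔ b) ⊓ c ≤ (a + b) ⊓ c := inf_le_inf_right c hab
  have h3 : (a + b) ⊓ c ≤ a ⊓ c + b ⊓ c := by
    rw [inf_comm (a+b) c]
    have := aux_inf_add_le hc ha hb
    rwa [inf_comm c a, inf_comm c b] at this
  rw [h1, h2, add_zero] at h3
  exact le_antisymm (this.trans h3) (le_inf (ha.trans le_sup_left) hc)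

lemma aux_isLUB_inf {A : Set E} {s : E} (hs : IsLUB A s) (a : E) :
    IsLUB ((fun x => a ⊓ x) '' A) (a ⊓ s) := by
  constructor
  · rintro _ ⟨x, hx, rfl⟩
    exact inf_le_inf_left a (hs.1 hx)
  · intro t ht
    have hub : ∀ x ∈ A, x ≤ t - a + (a ⊔ s) := by
      intro x hx
      have h1 : a ⊓ x + (a ⊔ x) = a + x := inf_add_sup a x
      have h2 : a ⊓ x ≤ t := ht ⟨x, hx, rfl⟩
      have h3 : a ⊔ x ≤ a ⊔ s := sup_le_sup_left (hs.1 hx) a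
      have h6 : a + x ≤ t + (a ⊔ s) := by
        rw [← h1]; exact add_le_add h2 h3
      have h7 := sub_le_sub_right h6 a
      calc x = a + x - a := by abel
        _ ≤ t + (a ⊔ s) - a := h7
        _ = t - a + (a ⊔ s) := by abel
    have h4 : s ≤ t - a + (a ⊔ s) := hs.2 hub
    have h5 : a ⊓ s + (a ⊔ s) = a + s := inf_add_sup a s
    have h6 : a + s ≤ t + (a ⊔ s) := by
      calc a + s ≤ a + (t - a + (a ⊔ s)) := add_le_add_right h4 a
        _ = t + (a ⊔ s) := by abel
    have h7 : a ⊓ s = a + s - (a ⊔ s) := by rw [← h5]; abel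
    rw [h7]
    exact sub_le_iff_le_add.mpr h6

end Aux

section Proj

variable {E : Type u} [Lattice E] [AddCommGroup E] [CovariantClass E E (· + ·) (· ≤ ·)]
variable (hppp : HasPPP E)
include hppp

lemma projP_isLUB {f x : E} (hx : 0 ≤ x) : IsLUB (projChain f x) (projP f x) := by
  have h : ∃ s, IsLUB (projChain f x) s := hppp f x hx
  rw [projP, dif_pos h]
  exact h.choose_spec

omit hppp in
omit [CovariantClass E E (· + ·) (· ≤ ·)] in
lemma zero_mem_projChain {f x : E} (hx : 0 ≤ x) : (0 : E) ∈ projChain f x :=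
  ⟨0, by simp [zero_nsmul, inf_eq_right.2 hx]⟩

lemma projP_nonneg {f x : E} (hx : 0 ≤ x) : 0 ≤ projP f x :=
  (projP_isLUB hppp hx).1 (zero_mem_projChain hx)

lemma projP_le_self {f x : E} (hx : 0 ≤ x) : projP f x ≤ x :=
  (projP_isLUB hppp hx).2 (by rintro y ⟨n, rfl⟩; exact inf_le_left)

lemma projP_zero (f : E) : projP f 0 = 0 := by
  have h0 : IsLUB (projChain f (0 : E)) 0 := by
    constructor
    · rintro y ⟨n, rfl⟩
      exact inf_le_left
    · intro t ht
      exact ht (zero_mem_projChain le_rfl)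
  exact ((projP_isLUB hppp le_rfl).unique h0)

lemma proj_of_nonneg {f x : E} (hx : 0 ≤ x) : proj f x = projP f x := by
  rw [proj, rpos, rpos, sup_eq_left.2 hx, sup_eq_right.2 (neg_nonpos.2 hx),
    projP_zero hppp, sub_zero]

lemma projP_residual {f x : E} (hx : 0 ≤ x) : (x - projP f x) ⊓ |f| = 0 := by
  set P := projP f x with hP
  have L := projP_isLUB hppp (f := f) hx
  set d := (x - P) ⊓ |f| with hd
  have key : ∀ n : ℕ, x ⊓ n • |f| + d ≤ x ⊓ (n + 1) • |f| := by
    intro n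
    have hPn : x ⊓ n • |f| ≤ P := L.1 ⟨n, rfl⟩
    have h1 : d ≤ (x - x ⊓ n • |f|) ⊓ |f| :=
      inf_le_inf_right _ (sub_le_sub_left hPn x)
    have h2 : x ⊓ n • |f| + (x - x ⊓ n • |f|) ⊓ |f| = x ⊓ (x ⊓ n • |f| + |f|) := by
      rw [add_inf]; congr 1; abel
    have h3 : x ⊓ (x ⊓ n • |f| + |f|) ≤ x ⊓ (n + 1) • |f| := by
      refine inf_le_inf_left x ?_
      rw [succ_nsmul]
      exact add_le_add_left inf_le_right _
    calc x ⊓ n • |f| + d ≤ x ⊓ n • |f| + (x - x ⊓ n • |f|) ⊓ |f| := add_le_add_right h1 _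
      _ = x ⊓ (x ⊓ n • |f| + |f|) := h2
      _ ≤ x ⊓ (n + 1) • |f| := h3
  have hub : P ≤ P - d := by
    refine L.2 ?_
    rintro y ⟨n, rfl⟩
    have := (key n).trans (L.1 ⟨n + 1, rfl⟩)
    exact le_sub_iff_add_le.2 this
  have hdle : d ≤ 0 := by
    have := sub_le_sub_right hub P
    simpa using sub_nonneg.1 (by simpa [sub_sub_cancel_left] using this)
  have hdge : 0 ≤ d := le_inf (sub_nonneg.2 (projP_le_self hppp hx)) (abs_nonneg f)
  exact le_antisymm hdle hdge

lemma projP_inband {f x z : E} (hx : 0 ≤ x) (hz : 0 ≤ z) (hzf : z ⊓ |f| = 0) :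
    z ⊓ projP f x = 0 := by
  have L := projP_isLUB hppp (f := f) hx
  have L2 := aux_isLUB_inf L z
  have hle : z ⊓ projP f x ≤ 0 := by
    refine L2.2 ?_
    rintro _ ⟨y, ⟨n, rfl⟩, rfl⟩
    have h1 : z ⊓ (x ⊓ n • |f|) ≤ z ⊓ (n • |f|) := inf_le_inf_left z inf_le_right
    have h2 : z ⊓ (n • |f|) = 0 := aux_disj_nsmul hz (abs_nonneg f) hzf n
    exact h1.trans_eq h2
  exact le_antisymm hle (le_inf hz (projP_nonneg hppp hx))

lemma projP_f_zero {x : E} (hx : 0 ≤ x) : projP (0 : E) x = 0 := by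
  have h0 : IsLUB (projChain (0:E) x) 0 := by
    constructor
    · rintro y ⟨n, rfl⟩
      simp [abs_zero, smul_zero, inf_eq_right.2 hx]
    · intro t ht
      exact ht (zero_mem_projChain hx)
  exact (projP_isLUB hppp hx).unique h0

end Proj

section Theta

variable {E : Type u} [Lattice E] [AddCommGroup E] [CovariantClass E E (· + ·) (· ≤ ·)]

lemma comp_nonneg {e p : E} (hp : p ∈ Comp e) : 0 ≤ p := by
  rw [← hp]; exact inf_le_left

lemma comp_sub_nonneg {e p : E} (hp : p ∈ Comp e) : 0 ≤ e - p := by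
  rw [← hp]; exact inf_le_right

lemma comp_le {e p : E} (hp : p ∈ Comp e) : p ≤ e :=
  sub_nonneg.1 (comp_sub_nonneg hp)

lemma disj_sup_iff {z a b : E} (hz : 0 ≤ z) (ha : 0 ≤ a) (hb : 0 ≤ b) :
    z ⊓ (a ⊔ b) = 0 ↔ z ⊓ a = 0 ∧ z ⊓ b = 0 := by
  constructor
  · intro h
    constructor
    · exact le_antisymm ((inf_le_inf_left z le_sup_left).trans h.le) (le_inf hz ha)
    · exact le_antisymm ((inf_le_inf_left z le_sup_right).trans h.le) (le_inf hz hb)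
  · rintro ⟨h1, h2⟩
    rw [inf_comm]
    exact aux_disj_sup ha hb hz (by rwa [inf_comm]) (by rwa [inf_comm])

lemma comp_sup {e p q : E} (hp : p ∈ Comp e) (hq : q ∈ Comp e) : p ⊔ q ∈ Comp e := by
  have hid : e - (p ⊔ q) = (e - p) ⊓ (e - q) := by
    simp [sub_eq_add_neg, neg_sup, add_inf]
  have h1 : p ⊓ ((e - p) ⊓ (e - q)) = 0 :=
    le_antisymm ((inf_le_inf_left p inf_le_left).trans_eq hp)
      (le_inf (comp_nonneg hp) (le_inf (comp_sub_nonneg hp) (comp_sub_nonneg hq)))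
  have h2 : q ⊓ ((e - p) ⊓ (e - q)) = 0 :=
    le_antisymm ((inf_le_inf_left q inf_le_right).trans_eq hq)
      (le_inf (comp_nonneg hq) (le_inf (comp_sub_nonneg hp) (comp_sub_nonneg hq)))
  show (p ⊔ q) ⊓ (e - (p ⊔ q)) = 0
  rw [hid]
  exact aux_disj_sup (comp_nonneg hp) (comp_nonneg hq)
    (le_inf (comp_sub_nonneg hp) (comp_sub_nonneg hq)) h1 h2

lemma comp_compl {e p : E} (hp : p ∈ Comp e) : e - p ∈ Comp e := by
  show (e - p) ⊓ (e - (e - p)) = 0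
  rw [sub_sub_cancel, inf_comm]
  exact hp

lemma comp_le_of_disj {v q₁ q₂ : E} (h₁ : q₁ ∈ Comp v) (h₂ : q₂ ∈ Comp v)
    (h : q₂ ⊓ (v - q₁) = 0) : q₂ ≤ q₁ := by
  have hq2v : q₂ = q₂ ⊓ v := (inf_eq_left.2 (comp_le h₂)).symm
  have hv : v = q₁ + (v - q₁) := by abel
  calc q₂ = q₂ ⊓ v := hq2v
    _ = q₂ ⊓ (q₁ + (v - q₁)) := by rw [← hv]
    _ ≤ q₂ ⊓ q₁ + q₂ ⊓ (v - q₁) :=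
        aux_inf_add_le (comp_nonneg h₂) (comp_nonneg h₁) (comp_sub_nonneg h₁)
    _ = q₂ ⊓ q₁ := by rw [h, add_zero]
    _ ≤ q₁ := inf_le_right

lemma comp_unique {v q₁ q₂ : E} (h₁ : q₁ ∈ Comp v) (h₂ : q₂ ∈ Comp v)
    (hband : ∀ z : E, 0 ≤ z → (z ⊓ q₁ = 0 ↔ z ⊓ q₂ = 0)) : q₁ = q₂ := by
  have d1 : (v - q₁) ⊓ q₂ = 0 := by
    rw [← hband _ (comp_sub_nonneg h₁)]
    rw [inf_comm]; exact h₁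
  have d2 : (v - q₂) ⊓ q₁ = 0 := by
    rw [hband _ (comp_sub_nonneg h₂)]
    rw [inf_comm]; exact h₂
  exact le_antisymm (comp_le_of_disj h₂ h₁ (by rwa [inf_comm] at d2))
    (comp_le_of_disj h₁ h₂ (by rwa [inf_comm] at d1))

variable (hppp : HasPPP E)
include hppp

lemma theta_residual {v p : E} (hv : 0 ≤ v) (hp : 0 ≤ p) :
    (v - projP p v) ⊓ p = 0 := by
  have := projP_residual hppp (f := p) hv
  rwa [abs_of_nonneg hp] at this

lemma theta_band_iff {v p z : E} (hv : IsWeakUnit v) (hp : 0 ≤ p) (hz : 0 ≤ z) :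
    z ⊓ projP p v = 0 ↔ z ⊓ p = 0 := by
  have hv0 : (0:E) ≤ v := hv.1.le
  constructor
  · intro h
    set q := projP p v with hq
    have hq0 : 0 ≤ q := projP_nonneg hppp hv0
    set w := z ⊓ p with hw
    have hw0 : 0 ≤ w := le_inf hz hp
    have hw1 : w ⊓ q = 0 :=
      le_antisymm ((inf_le_inf_right q inf_le_left).trans h.le) (le_inf hw0 hq0)
    have hres : (v - q) ⊓ p = 0 := theta_residual hppp hv0 hp
    have hvq0 : 0 ≤ v - q := sub_nonneg.2 (projP_le_self hppp hv0)
    have hw2 : w ⊓ (v - q) = 0 := by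
      refine le_antisymm ?_ (le_inf hw0 hvq0)
      calc w ⊓ (v - q) ≤ p ⊓ (v - q) := inf_le_inf_right _ inf_le_right
        _ = 0 := by rw [inf_comm]; exact hres
    have hwv : w ⊓ v = 0 := by
      have hv' : v = q + (v - q) := by abel
      refine le_antisymm ?_ (le_inf hw0 hv0)
      calc w ⊓ v = w ⊓ (q + (v - q)) := by rw [← hv']
        _ ≤ w ⊓ q + w ⊓ (v - q) := aux_inf_add_le hw0 hq0 hvq0
        _ = 0 := by rw [hw1, hw2, add_zero]
    exact hv.2 w hw0 hwv
  · intro h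
    exact projP_inband hppp hv0 hz (by rwa [abs_of_nonneg hp])

lemma theta_comp {v p : E} (hv : IsWeakUnit v) (hp : 0 ≤ p) :
    projP p v ∈ Comp v := by
  have hv0 : (0:E) ≤ v := hv.1.le
  have hres : (v - projP p v) ⊓ p = 0 := theta_residual hppp hv0 hp
  have := projP_inband hppp (x := v) hv0 (sub_nonneg.2 (projP_le_self hppp hv0))
    (by rwa [abs_of_nonneg hp])
  show projP p v ⊓ (v - projP p v) = 0
  rw [inf_comm]; exact this

lemma theta_theta {u v p : E} (hu : IsWeakUnit u) (hv : IsWeakUnit v)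
    (hp : p ∈ Comp u) : projP (projP p v) u = p := by
  have hu0 : (0:E) ≤ u := hu.1.le
  have hv0 : (0:E) ≤ v := hv.1.le
  have hp0 : 0 ≤ p := comp_nonneg hp
  set q := projP p v with hq
  have hq0 : 0 ≤ q := projP_nonneg hppp hv0
  have hup0 : 0 ≤ u - p := comp_sub_nonneg hp
  have hqu : (u - p) ⊓ q = 0 := by
    rw [theta_band_iff hppp hv hp0 hup0]
    rw [inf_comm]; exact hp
  set r := projP q u with hr
  have hr0 : 0 ≤ r := projP_nonneg hppp hu0
  have hrp : r ≤ p := by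
    refine (projP_isLUB hppp hu0).2 ?_
    rintro y ⟨n, rfl⟩
    rw [abs_of_nonneg hq0]
    have h1 : (u - p) ⊓ n • q = 0 := aux_disj_nsmul hup0 hq0 hqu n
    have hnq0 : 0 ≤ n • q := nsmul_nonneg hq0 n
    have hu' : u = p + (u - p) := by abel
    calc u ⊓ n • q = n • q ⊓ u := inf_comm ..
      _ = n • q ⊓ (p + (u - p)) := by rw [← hu']
      _ ≤ n • q ⊓ p + n • q ⊓ (u - p) := aux_inf_add_le hnq0 hp0 hup0
      _ = n • q ⊓ p := by rw [inf_comm (n • q) (u-p), h1, add_zero]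
      _ ≤ p := inf_le_right
  have hpr0 : 0 ≤ p - r := sub_nonneg.2 hrp
  have hprq : (p - r) ⊓ q = 0 := by
    refine le_antisymm ?_ (le_inf hpr0 hq0)
    calc (p - r) ⊓ q ≤ (u - r) ⊓ q :=
          inf_le_inf_right q (sub_le_sub_right (comp_le hp) r)
      _ = 0 := theta_residual hppp hu0 hq0
  have hprp : (p - r) ⊓ p = 0 := by
    rw [← theta_band_iff hppp hv hp0 hpr0]
    exact hprq
  have : p - r = 0 := by
    have h1 : (p - r) ⊓ p = p - r := inf_eq_left.2 (sub_le_self p hr0)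
    rw [h1] at hprp; exact hprp
  have := sub_eq_zero.1 this
  rw [← hr, ← hq] at *
  exact this.symm

lemma theta_unit {u v : E} (hu : IsWeakUnit u) (hv : IsWeakUnit v) :
    projP u v = v := by
  have hv0 : (0:E) ≤ v := hv.1.le
  have hres : (v - projP u v) ⊓ u = 0 := theta_residual hppp hv0 hu.1.le
  have := hu.2 _ (sub_nonneg.2 (projP_le_self hppp hv0)) hres
  exact (sub_eq_zero.1 this).symm

lemma theta_sup {u v p q : E} (hu : IsWeakUnit u) (hv : IsWeakUnit v)
    (hp : p ∈ Comp u) (hq : q ∈ Comp u) :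
    projP (p ⊔ q) v = projP p v ⊔ projP q v := by
  have hv0 : (0:E) ≤ v := hv.1.le
  have hp0 := comp_nonneg hp
  have hq0 := comp_nonneg hq
  have hpq0 : 0 ≤ p ⊔ q := hp0.trans le_sup_left
  have hP0 : 0 ≤ projP p v := projP_nonneg hppp hv0
  have hQ0 : 0 ≤ projP q v := projP_nonneg hppp hv0
  refine comp_unique (theta_comp hppp hv hpq0)
    (comp_sup (theta_comp hppp hv hp0) (theta_comp hppp hv hq0)) ?_
  intro z hz
  rw [theta_band_iff hppp hv hpq0 hz, disj_sup_iff hz hp0 hq0,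
    disj_sup_iff hz hP0 hQ0, theta_band_iff hppp hv hp0 hz,
    theta_band_iff hppp hv hq0 hz]

lemma theta_disj {u v p q : E} (hv : IsWeakUnit v)
    (hp0 : 0 ≤ p) (hq0 : 0 ≤ q) (hpq : p ⊓ q = 0) :
    projP p v ⊓ projP q v = 0 := by
  have hP0 : 0 ≤ projP p v := projP_nonneg hppp hv.1.le
  have hQ0 : 0 ≤ projP q v := projP_nonneg hppp hv.1.le
  have h1 : p ⊓ projP q v = 0 := by
    rw [theta_band_iff hppp hv hq0 hp0]; exact hpq
  have h2 : projP q v ⊓ projP p v = 0 := by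
    rw [theta_band_iff hppp hv hp0 hQ0, inf_comm]; exact h1
  rw [inf_comm]; exact h2

lemma theta_add {u v p q : E} (hu : IsWeakUnit u) (hv : IsWeakUnit v)
    (hp : p ∈ Comp u) (hq : q ∈ Comp u) (hpq : p ⊓ q = 0) :
    projP (p + q) v = projP p v + projP q v := by
  have hsum : p + q = p ⊔ q := by
    have := inf_add_sup p q
    rw [hpq, zero_add] at this
    exact this.symm
  have hd : projP p v ⊓ projP q v = 0 :=
    theta_disj (u := u) hppp hv (comp_nonneg hp) (comp_nonneg hq) hpq
  have h2 : projP p v ⊓ projP q v + (projP p v ⊔ projP q v)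
      = projP p v + projP q v := inf_add_sup _ _
  rw [hd, zero_add] at h2
  rw [hsum, theta_sup hppp hu hv hp hq, ← h2]

lemma theta_compl {u v p : E} (hu : IsWeakUnit u) (hv : IsWeakUnit v)
    (hp : p ∈ Comp u) : projP (u - p) v = v - projP p v := by
  have hc : u - p ∈ Comp u := comp_compl hp
  have hadd := theta_add hppp hu hv hp hc hp
  rw [add_sub_cancel, theta_unit hppp hu hv] at hadd
  rw [eq_sub_iff_add_eq, add_comm]; exact hadd.symm

lemma theta_inf {u v p q : E} (hu : IsWeakUnit u) (hv : IsWeakUnit v)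
    (hp : p ∈ Comp u) (hq : q ∈ Comp u) :
    projP (p ⊓ q) v = projP p v ⊓ projP q v := by
  have hid : ∀ (w a b : E), (w - a) ⊔ (w - b) = w - a ⊓ b := by
    intro w a b
    simp [sub_eq_add_neg, neg_inf, add_sup]
  have h1 : p ⊓ q = u - ((u - p) ⊔ (u - q)) := by
    rw [hid, sub_sub_cancel]
  rw [h1, theta_compl hppp hu hv (comp_sup (comp_compl hp) (comp_compl hq)),
    theta_sup hppp hu hv (comp_compl hp) (comp_compl hq),
    theta_compl hppp hu hv hp, theta_compl hppp hu hv hq, hid, sub_sub_cancel]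

end Theta

/-- Let `E` be a Riesz space with the principal projection property,
`e₁, e₂ ∈ E` weak order units and `F` a Dedekind complete Riesz space.  Then
(a) `θ₁ : C_{e₁} → C_{e₂}, p ↦ P_p e₂` and `θ₂ : C_{e₂} → C_{e₁}, q ↦ P_q e₁` are
mutually inverse lattice isomorphisms; (b) composition with `θ₁` (resp. `θ₂`) maps
`ba(C_{e₂},F)` into `ba(C_{e₁},F)` (resp. conversely); and (c) the induced maps
`Φ₁ : μ ↦ μ ∘ θ₁` and `Φ₂ : μ ↦ μ ∘ θ₂` are mutually inverse Riesz isomorphisms. -/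
theorem charges_independent_of_weak_unit
    {E : Type u} [Lattice E] [AddCommGroup E] [Module ℝ E]
    [CovariantClass E E (· + ·) (· ≤ ·)] [PosSMulMono ℝ E]
    {F : Type v} [ConditionallyCompleteLattice F] [AddCommGroup F] [Module ℝ F]
    [CovariantClass F F (· + ·) (· ≤ ·)] [PosSMulMono ℝ F]
    (hppp : HasPPP E) (e₁ e₂ : E) (h₁ : IsWeakUnit e₁) (h₂ : IsWeakUnit e₂) :
    -- (a) θ₁ and θ₂ are mutually inverse lattice isomorphisms
    (∀ p ∈ Comp e₁, proj p e₂ ∈ Comp e₂ ∧ proj (proj p e₂) e₁ = p) ∧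
    (∀ q ∈ Comp e₂, proj q e₁ ∈ Comp e₁ ∧ proj (proj q e₁) e₂ = q) ∧
    (∀ p ∈ Comp e₁, ∀ q ∈ Comp e₁,
      proj (p ⊔ q) e₂ = proj p e₂ ⊔ proj q e₂ ∧
      proj (p ⊓ q) e₂ = proj p e₂ ⊓ proj q e₂) ∧
    (∀ p ∈ Comp e₂, ∀ q ∈ Comp e₂,
      proj (p ⊔ q) e₁ = proj p e₁ ⊔ proj q e₁ ∧
      proj (p ⊓ q) e₁ = proj p e₁ ⊓ proj q e₁) ∧
    -- (b) composition with θ₁, θ₂ preserves order bounded charges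
    (∀ μ ∈ baSet (F := F) e₂, (fun p => μ (proj p e₂)) ∈ baSet (F := F) e₁) ∧
    (∀ μ ∈ baSet (F := F) e₁, (fun q => μ (proj q e₁)) ∈ baSet (F := F) e₂) ∧
    -- (c) Φ₁ and Φ₂ are mutually inverse Riesz isomorphisms
    (∀ μ ∈ baSet (F := F) e₂, ∀ q ∈ Comp e₂, μ (proj (proj q e₁) e₂) = μ q) ∧
    (∀ μ ∈ baSet (F := F) e₁, ∀ p ∈ Comp e₁, μ (proj (proj p e₂) e₁) = μ p) ∧
    (∀ μ ∈ baSet (F := F) e₂, ∀ ν ∈ baSet (F := F) e₂,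
      (baLe e₂ μ ν ↔ baLe e₁ (fun p => μ (proj p e₂)) (fun p => ν (proj p e₂)))) ∧
    (∀ μ ∈ baSet (F := F) e₂, ∀ ν ∈ baSet (F := F) e₂, ∀ η : E → F,
      IsLUBba e₂ {μ, ν} η →
      IsLUBba e₁ {fun p => μ (proj p e₂), fun p => ν (proj p e₂)}
        (fun p => η (proj p e₂))) := by
  have he₁ : (0:E) ≤ e₁ := h₁.1.le
  have he₂ : (0:E) ≤ e₂ := h₂.1.le
  have P1 : ∀ f : E, proj f e₁ = projP f e₁ := fun f => proj_of_nonneg hppp he₁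
  have P2 : ∀ f : E, proj f e₂ = projP f e₂ := fun f => proj_of_nonneg hppp he₂
  -- part (a)
  have A1 : ∀ p ∈ Comp e₁, proj p e₂ ∈ Comp e₂ ∧ proj (proj p e₂) e₁ = p := by
    intro p hp
    rw [P2, P1]
    exact ⟨theta_comp hppp h₂ (comp_nonneg hp), theta_theta hppp h₁ h₂ hp⟩
  have A2 : ∀ q ∈ Comp e₂, proj q e₁ ∈ Comp e₁ ∧ proj (proj q e₁) e₂ = q := by
    intro q hq
    rw [P1, P2]
    exact ⟨theta_comp hppp h₁ (comp_nonneg hq), theta_theta hppp h₂ h₁ hq⟩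
  -- part (b), stated for a generic pair of units
  have B1 : ∀ μ : E → F, μ ∈ baSet (F := F) e₂ →
      (fun p => μ (proj p e₂)) ∈ baSet (F := F) e₁ := by
    rintro μ ⟨⟨hz, hadd⟩, g, hg0, hgb⟩
    refine ⟨⟨?_, ?_⟩, g, hg0, ?_⟩
    · show μ (proj 0 e₂) = 0
      rw [P2, projP_f_zero hppp he₂, hz]
    · intro p q hp hq hpq
      show μ (proj (p + q) e₂) = μ (proj p e₂) + μ (proj q e₂)
      rw [P2, P2, P2, theta_add hppp h₁ h₂ hp hq hpq]
      exact hadd _ _ (theta_comp hppp h₂ (comp_nonneg hp))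
        (theta_comp hppp h₂ (comp_nonneg hq))
        (theta_disj (u := e₁) hppp h₂ (comp_nonneg hp) (comp_nonneg hq) hpq)
    · intro p hp
      show |μ (proj p e₂)| ≤ g
      rw [P2]
      exact hgb _ (theta_comp hppp h₂ (comp_nonneg hp))
  have B2 : ∀ μ : E → F, μ ∈ baSet (F := F) e₁ →
      (fun q => μ (proj q e₁)) ∈ baSet (F := F) e₂ := by
    rintro μ ⟨⟨hz, hadd⟩, g, hg0, hgb⟩
    refine ⟨⟨?_, ?_⟩, g, hg0, ?_⟩
    · show μ (proj 0 e₁) = 0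
      rw [P1, projP_f_zero hppp he₁, hz]
    · intro p q hp hq hpq
      show μ (proj (p + q) e₁) = μ (proj p e₁) + μ (proj q e₁)
      rw [P1, P1, P1, theta_add hppp h₂ h₁ hp hq hpq]
      exact hadd _ _ (theta_comp hppp h₁ (comp_nonneg hp))
        (theta_comp hppp h₁ (comp_nonneg hq))
        (theta_disj (u := e₂) hppp h₁ (comp_nonneg hp) (comp_nonneg hq) hpq)
    · intro p hp
      show |μ (proj p e₁)| ≤ g
      rw [P1]
      exact hgb _ (theta_comp hppp h₁ (comp_nonneg hp))
  -- part (c)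
  have C1 : ∀ μ : E → F, ∀ q ∈ Comp e₂, μ (proj (proj q e₁) e₂) = μ q := by
    intro μ q hq
    rw [P1, P2, theta_theta hppp h₂ h₁ hq]
  have C2 : ∀ μ : E → F, ∀ p ∈ Comp e₁, μ (proj (proj p e₂) e₁) = μ p := by
    intro μ p hp
    rw [P2, P1, theta_theta hppp h₁ h₂ hp]
  have C3 : ∀ μ ν : E → F,
      (baLe e₂ μ ν ↔ baLe e₁ (fun p => μ (proj p e₂)) (fun p => ν (proj p e₂))) := by
    intro μ ν
    constructor
    · intro h p hp
      refine h _ ?_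
      rw [P2]
      exact theta_comp hppp h₂ (comp_nonneg hp)
    · intro h q hq
      have hq1 : projP q e₁ ∈ Comp e₁ := theta_comp hppp h₁ (comp_nonneg hq)
      have := h (projP q e₁) hq1
      simp only at this
      rwa [P2, theta_theta hppp h₂ h₁ hq] at this
  refine ⟨A1, A2, ?_, ?_, fun μ hμ => B1 μ hμ, fun μ hμ => B2 μ hμ,
    fun μ _ => C1 μ, fun μ _ => C2 μ, fun μ _ ν _ => C3 μ ν, ?_⟩
  · intro p hp q hq
    simp only [P2]
    exact ⟨theta_sup hppp h₁ h₂ hp hq, theta_inf hppp h₁ h₂ hp hq⟩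
  · intro p hp q hq
    simp only [P1]
    exact ⟨theta_sup hppp h₂ h₁ hp hq, theta_inf hppp h₂ h₁ hp hq⟩
  · rintro μ hμ ν hν η ⟨hη, hub, hlub⟩
    refine ⟨B1 η hη, ?_, ?_⟩
    · intro μ' hμ'
      rcases hμ' with rfl | hμ'
      · exact (C3 μ η).1 (hub μ (Set.mem_insert _ _))
      · rw [Set.mem_singleton_iff] at hμ'
        subst hμ'
        exact (C3 ν η).1 (hub ν (Set.mem_insert_of_mem _ rfl))
    · intro ξ hξ hξub
      have hξ2 : (fun q => ξ (proj q e₁)) ∈ baSet (F := F) e₂ := B2 ξ hξ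
      have hμle : baLe e₂ μ (fun q => ξ (proj q e₁)) := by
        intro q hq
        have h1 := hξub _ (Set.mem_insert _ _) (proj q e₁)
          ((A2 q hq).1)
        simp only at h1 ⊢
        rw [C1 μ q hq] at h1
        exact h1
      have hνle : baLe e₂ ν (fun q => ξ (proj q e₁)) := by
        intro q hq
        have h1 := hξub _ (Set.mem_insert_of_mem _ rfl) (proj q e₁)
          ((A2 q hq).1)
        simp only at h1 ⊢
        rw [C1 ν q hq] at h1
        exact h1
      have hfin := hlub _ hξ2 (by
        rintro μ' hμ'
        rcases hμ' with rfl | hμ'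
        · exact hμle
        · rw [Set.mem_singleton_iff] at hμ'
          subst hμ'
          exact hνle)
      intro p hp
      have hp2 : proj p e₂ ∈ Comp e₂ := (A1 p hp).1
      have := hfin _ hp2
      simp only at this ⊢
      rwa [C2 ξ p hp] at this

end RieszPaper

end
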